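/- Let H be a connected 3-or-more-uniform hypergraph on t vertices with at least 2 edges, each edge of size at least 3, such that the edges can be ordered e_1,…,e_k with each e_j (j ≥ 2) intersecting some earlier edge. Define ‖H‖ = Σ_{e ∈ H} (|e|-1)(|e|-2)/2. Then ‖H‖ ≥ 2t/5, where t ≤ Σ|e_j| - (k-1). -/

import Mathlib

/-- For a connected hypergraph `H` on `t` vertices with `k ≥ 2` distinct edges, each
of size at least 3, whose edges can be ordered so that each edge after the first
meets an earlier one: writing `‖H‖ = Σ_e (|e|-1)(|e|-2)/2`, we have
`t ≤ Σ|e| - (k-1)` and `‖H‖ ≥ 2t/5`. -/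
theorem hypergraph_norm_ge {V : Type*} [DecidableEq V] (k : ℕ) (hk : 2 ≤ k)
    (e : Fin k → Finset V) (he : Function.Injective e)
    (hsize : ∀ i, 3 ≤ (e i).card)
    (hconn : ∀ j : Fin k, 0 < (j : ℕ) → ∃ i : Fin k, (i : ℕ) < (j : ℕ) ∧ (e i ∩ e j).Nonempty) :
    (Finset.univ.biUnion e).card ≤ (∑ i : Fin k, (e i).card) - (k - 1) ∧
    (2 : ℚ) * (Finset.univ.biUnion e).card / 5 ≤
      ∑ i : Fin k, (((e i).card : ℚ) - 1) * (((e i).card : ℚ) - 2) / 2 := by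
  have key : ∀ j : ℕ, 1 ≤ j → j ≤ k →
      ((Finset.univ.filter fun i : Fin k => (i : ℕ) < j).biUnion e).card + (j - 1)
        ≤ ∑ i ∈ Finset.univ.filter (fun i : Fin k => (i : ℕ) < j), (e i).card := by
    intro j
    induction j with
    | zero => omega
    | succ n ih =>
      intro _ hnk
      rcases Nat.eq_zero_or_pos n with hn | hn
      · subst hn
        have hfil : (Finset.univ.filter fun i : Fin k => (i : ℕ) < 1)
            = {(⟨0, by omega⟩ : Fin k)} := by
          ext i
          simp only [Finset.mem_filter, Finset.mem_univ, true_and,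
            Finset.mem_singleton, Fin.ext_iff]
          omega
        rw [hfil]
        simp
      · have hjk : n < k := hnk
        set jn : Fin k := ⟨n, hjk⟩ with hjn
        have hfil : (Finset.univ.filter fun i : Fin k => (i : ℕ) < n + 1)
            = insert jn (Finset.univ.filter fun i : Fin k => (i : ℕ) < n) := by
          ext i
          simp only [Finset.mem_filter, Finset.mem_univ, true_and,
            Finset.mem_insert, Fin.ext_iff, hjn]
          omega
        have hnot : jn ∉ (Finset.univ.filter fun i : Fin k => (i : ℕ) < n) := by
          simp [hjn]
        rw [hfil, Finset.biUnion_insert, Finset.sum_insert hnot]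
        obtain ⟨i, hi, x, hx⟩ := hconn jn (by simpa [hjn] using hn)
        simp only [Finset.mem_inter] at hx
        have hxU : x ∈ (Finset.univ.filter fun i : Fin k => (i : ℕ) < n).biUnion e := by
          refine Finset.mem_biUnion.2 ⟨i, ?_, hx.1⟩
          simpa [hjn] using hi
        have hint : 1 ≤ ((e jn ∩ (Finset.univ.filter fun i : Fin k => (i : ℕ) < n).biUnion e).card) := by
          refine Finset.card_pos.2 ⟨x, ?_⟩
          exact Finset.mem_inter.2 ⟨hx.2, hxU⟩
        have hcu := Finset.card_union_add_card_inter (e jn)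
          ((Finset.univ.filter fun i : Fin k => (i : ℕ) < n).biUnion e)
        have := ih hn (by omega)
        omega
  have hfilk : (Finset.univ.filter fun i : Fin k => (i : ℕ) < k) = Finset.univ := by
    ext i; simp [i.isLt]
  have hmain : (Finset.univ.biUnion e).card + (k - 1) ≤ ∑ i : Fin k, (e i).card := by
    have := key k (by omega) le_rfl
    rwa [hfilk] at this
  constructor
  · omega
  · set t : ℕ := (Finset.univ.biUnion e).card with ht
    have htQ : (t : ℚ) + (k : ℚ) - 1 ≤ ∑ i : Fin k, ((e i).card : ℚ) := by
      have h1 : t + (k - 1) ≤ ∑ i : Fin k, (e i).card := hmain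
      have h2 : ((t + (k - 1) : ℕ) : ℚ) ≤ ((∑ i : Fin k, (e i).card : ℕ) : ℚ) := by
        exact_mod_cast h1
      push_cast at h2
      have : ((k - 1 : ℕ) : ℚ) = (k : ℚ) - 1 := by
        have : 1 ≤ k := by omega
        push_cast [this]
        ring
      linarith [h2, this.symm ▸ h2]
    have hper : ∀ i : Fin k, (2 * ((e i).card : ℚ) - 1) / 5
        ≤ (((e i).card : ℚ) - 1) * (((e i).card : ℚ) - 2) / 2 := by
      intro i
      have h3 : (3 : ℚ) ≤ ((e i).card : ℚ) := by exact_mod_cast hsize i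
      nlinarith [sq_nonneg (((e i).card : ℚ) - 3)]
    have hsum : ∑ i : Fin k, (2 * ((e i).card : ℚ) - 1) / 5
        ≤ ∑ i : Fin k, (((e i).card : ℚ) - 1) * (((e i).card : ℚ) - 2) / 2 :=
      Finset.sum_le_sum fun i _ => hper i
    have hsum2 : ∑ i : Fin k, (2 * ((e i).card : ℚ) - 1) / 5
        = (2 * (∑ i : Fin k, ((e i).card : ℚ)) - k) / 5 := by
      rw [← Finset.sum_div, Finset.sum_sub_distrib, ← Finset.mul_sum]
      simp
    rw [hsum2] at hsum
    have hk2 : (2 : ℚ) ≤ (k : ℚ) := by exact_mod_cast hk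
    linarith
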